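/- Let B, C, D be three non-collinear points of the Euclidean plane ℝ², let O be the circumcenter and r the circumradius of triangle BCD. Let A be a point such that A and D lie strictly on opposite sides of the line through B and C. If dist(A, O) < r (A is strictly inside the circumcircle of BCD), then ∠BAC + ∠BDC > π, where ∠BAC denotes the undirected angle at A between rays AB and AC, valued in [0, π], and similarly for ∠BDC. -/

import Mathlib

open Real EuclideanGeometry

namespace InsideCircumcircleAux

noncomputable def cross (x y : EuclideanSpace ℝ (Fin 2)) : ℝ :=
  x 0 * y 1 - x 1 * y 0

lemma inner_eq (x y : EuclideanSpace ℝ (Fin 2)) :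
    (inner ℝ x y : ℝ) = x 0 * y 0 + x 1 * y 1 := by
  simp [PiLp.inner_apply, Fin.sum_univ_two, RCLike.inner_apply, mul_comm]

lemma sin_angle_mul (x y : EuclideanSpace ℝ (Fin 2)) :
    Real.sin (InnerProductGeometry.angle x y) * (‖x‖ * ‖y‖) = |cross x y| := by
  rw [InnerProductGeometry.sin_angle_mul_norm_mul_norm]
  have : (inner ℝ x x : ℝ) * (inner ℝ y y : ℝ) - (inner ℝ x y : ℝ) * (inner ℝ x y : ℝ)
      = (cross x y) ^ 2 := by
    simp only [inner_eq, cross]; ring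
  rw [this, Real.sqrt_sq_eq_abs]

lemma cos_angle_mul (x y : EuclideanSpace ℝ (Fin 2)) :
    Real.cos (InnerProductGeometry.angle x y) * (‖x‖ * ‖y‖) = (inner ℝ x y : ℝ) :=
  InnerProductGeometry.cos_angle_mul_norm_mul_norm x y

lemma exists_smul_of_cross_eq_zero {w z : EuclideanSpace ℝ (Fin 2)} (hw : w ≠ 0)
    (h : cross w z = 0) : ∃ t : ℝ, t • w = z := by
  have hw' : w 0 ≠ 0 ∨ w 1 ≠ 0 := by
    by_contra hc
    push_neg at hc
    apply hw
    ext i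
    fin_cases i <;> simp [hc.1, hc.2]
  unfold cross at h
  rcases hw' with h0 | h0
  · refine ⟨z 0 / w 0, ?_⟩
    ext i
    fin_cases i <;> simp only [PiLp.smul_apply, smul_eq_mul, Fin.zero_eta, Fin.mk_one] <;> field_simp <;> nlinarith [h]
  · refine ⟨z 1 / w 1, ?_⟩
    ext i
    fin_cases i <;> simp only [PiLp.smul_apply, smul_eq_mul, Fin.zero_eta, Fin.mk_one] <;> field_simp <;> nlinarith [h]

lemma key (a1 a2 b1 b2 c1 c2 d1 d2 o1 o2 r : ℝ)
    (hB : (b1 - o1) ^ 2 + (b2 - o2) ^ 2 = r ^ 2)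
    (hC : (c1 - o1) ^ 2 + (c2 - o2) ^ 2 = r ^ 2)
    (hD : (d1 - o1) ^ 2 + (d2 - o2) ^ 2 = r ^ 2) :
    ((b1 - a1) * (c1 - a1) + (b2 - a2) * (c2 - a2))
        * ((b1 - d1) * (c2 - d2) - (b2 - d2) * (c1 - d1))
      - ((b1 - d1) * (c1 - d1) + (b2 - d2) * (c2 - d2))
        * ((b1 - a1) * (c2 - a2) - (b2 - a2) * (c1 - a1))
      = ((b1 - d1) * (c2 - d2) - (b2 - d2) * (c1 - d1))
        * ((a1 - o1) ^ 2 + (a2 - o2) ^ 2 - r ^ 2) := by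
  linear_combination
    (-a1 * c2 + a1 * d2 + a2 * c1 - a2 * d1 - c1 * d2 + c2 * d1) * hB +
    (a1 * b2 - a1 * d2 - a2 * b1 + a2 * d1 + b1 * d2 - b2 * d1) * hC +
    (-a1 * b2 + a1 * c2 + a2 * b1 - a2 * c1 - b1 * c2 + b2 * c1) * hD

end InsideCircumcircleAux

open InsideCircumcircleAux

set_option maxHeartbeats 1000000 in
theorem inside_circumcircle_angle_sum_gt_pi
    (A B C D O : EuclideanSpace ℝ (Fin 2)) (r : ℝ)
    (hncol : ¬ Collinear ℝ ({B, C, D} : Set (EuclideanSpace ℝ (Fin 2))))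
    (hB : dist B O = r) (hC : dist C O = r) (hD : dist D O = r)
    (hside : (affineSpan ℝ ({B, C} : Set (EuclideanSpace ℝ (Fin 2)))).SOppSide A D)
    (hin : dist A O < r) :
    ∠ B A C + ∠ B D C > π := by
  classical
  obtain ⟨⟨p₁, hp₁, p₂, hp₂, hray⟩, hAs, hDs⟩ := hside
  have hBs : B ∈ affineSpan ℝ ({B, C} : Set (EuclideanSpace ℝ (Fin 2))) :=
    mem_affineSpan ℝ (by simp)
  have hCs : C ∈ affineSpan ℝ ({B, C} : Set (EuclideanSpace ℝ (Fin 2))) :=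
    mem_affineSpan ℝ (by simp)
  have hBC : B ≠ C := by
    rintro rfl
    exact hncol (by simpa [Set.insert_comm] using collinear_pair ℝ B D)
  -- dist squared facts
  have distsq : ∀ P Q : EuclideanSpace ℝ (Fin 2),
      dist P Q ^ 2 = (P 0 - Q 0) ^ 2 + (P 1 - Q 1) ^ 2 := by
    intro P Q
    rw [EuclideanSpace.dist_eq, Real.sq_sqrt (by positivity)]
    simp [Fin.sum_univ_two, Real.dist_eq, sq_abs]
  have hr0 : 0 ≤ r := hB ▸ dist_nonneg
  have hBsq : (B 0 - O 0) ^ 2 + (B 1 - O 1) ^ 2 = r ^ 2 := by rw [← distsq, hB]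
  have hCsq : (C 0 - O 0) ^ 2 + (C 1 - O 1) ^ 2 = r ^ 2 := by rw [← distsq, hC]
  have hDsq : (D 0 - O 0) ^ 2 + (D 1 - O 1) ^ 2 = r ^ 2 := by rw [← distsq, hD]
  have hAsq : (A 0 - O 0) ^ 2 + (A 1 - O 1) ^ 2 - r ^ 2 < 0 := by
    have h2 : dist A O ^ 2 < r ^ 2 := by
      apply sq_lt_sq' _ hin
      linarith [dist_nonneg (x := A) (y := O)]
    rw [distsq] at h2
    linarith
  -- if cross = 0 then point on the line
  have mem_of_cross : ∀ P : EuclideanSpace ℝ (Fin 2), cross (B - P) (C - P) = 0 →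
      P ∈ affineSpan ℝ ({B, C} : Set (EuclideanSpace ℝ (Fin 2))) := by
    intro P hP
    have hw : C - B ≠ (0 : EuclideanSpace ℝ (Fin 2)) := sub_ne_zero.mpr hBC.symm
    have hcross : cross (C - B) (P - B) = 0 := by
      unfold cross at hP ⊢
      simp only [PiLp.sub_apply] at hP ⊢
      linear_combination hP
    obtain ⟨t, ht⟩ := exists_smul_of_cross_eq_zero hw hcross
    have hmem : (P - B) +ᵥ B ∈ affineSpan ℝ ({B, C} : Set (EuclideanSpace ℝ (Fin 2))) := by
      refine vadd_left_mem_affineSpan_pair.mpr ⟨t, ?_⟩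
      simpa [vsub_eq_sub] using ht
    simpa using hmem
  have hXA0 : cross (B - A) (C - A) ≠ 0 := fun h => hAs (mem_of_cross A h)
  have hXD0 : cross (B - D) (C - D) ≠ 0 := fun h => hDs (mem_of_cross D h)
  -- opposite signs
  have hXAXD : cross (B - A) (C - A) * cross (B - D) (C - D) < 0 := by
    obtain ⟨t₁, ht₁⟩ : ∃ t : ℝ, t • (C - B) = p₁ - B := by
      have h2 : (p₁ - B) +ᵥ B ∈ affineSpan ℝ ({B, C} : Set (EuclideanSpace ℝ (Fin 2))) := by
        simpa using hp₁
      obtain ⟨t, ht⟩ := vadd_left_mem_affineSpan_pair.mp h2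
      exact ⟨t, by simpa [vsub_eq_sub] using ht⟩
    obtain ⟨t₂, ht₂⟩ : ∃ t : ℝ, t • (C - B) = p₂ - B := by
      have h2 : (p₂ - B) +ᵥ B ∈ affineSpan ℝ ({B, C} : Set (EuclideanSpace ℝ (Fin 2))) := by
        simpa using hp₂
      obtain ⟨t, ht⟩ := vadd_left_mem_affineSpan_pair.mp h2
      exact ⟨t, by simpa [vsub_eq_sub] using ht⟩
    have hA1 : A -ᵥ p₁ ≠ 0 := by
      rw [vsub_ne_zero]
      rintro rfl; exact hAs hp₁
    have hD1 : p₂ -ᵥ D ≠ 0 := by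
      rw [vsub_ne_zero]
      rintro rfl; exact hDs hp₂
    obtain ⟨r₁, r₂, hr₁, hr₂, hreq⟩ := hray.exists_pos hA1 hD1
    have e1 : p₁ 0 - B 0 = t₁ * (C 0 - B 0) := by
      have h2 := congrFun (congrArg (fun v : EuclideanSpace ℝ (Fin 2) => (v : Fin 2 → ℝ)) ht₁) 0
      simp only [PiLp.smul_apply, PiLp.sub_apply, smul_eq_mul] at h2
      linarith [h2]
    have e2 : p₁ 1 - B 1 = t₁ * (C 1 - B 1) := by
      have h2 := congrFun (congrArg (fun v : EuclideanSpace ℝ (Fin 2) => (v : Fin 2 → ℝ)) ht₁) 1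
      simp only [PiLp.smul_apply, PiLp.sub_apply, smul_eq_mul] at h2
      linarith [h2]
    have e3 : p₂ 0 - B 0 = t₂ * (C 0 - B 0) := by
      have h2 := congrFun (congrArg (fun v : EuclideanSpace ℝ (Fin 2) => (v : Fin 2 → ℝ)) ht₂) 0
      simp only [PiLp.smul_apply, PiLp.sub_apply, smul_eq_mul] at h2
      linarith [h2]
    have e4 : p₂ 1 - B 1 = t₂ * (C 1 - B 1) := by
      have h2 := congrFun (congrArg (fun v : EuclideanSpace ℝ (Fin 2) => (v : Fin 2 → ℝ)) ht₂) 1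
      simp only [PiLp.smul_apply, PiLp.sub_apply, smul_eq_mul] at h2
      linarith [h2]
    have e5 : r₁ * (A 0 - p₁ 0) = r₂ * (p₂ 0 - D 0) := by
      have h2 := congrFun (congrArg (fun v : EuclideanSpace ℝ (Fin 2) => (v : Fin 2 → ℝ)) hreq) 0
      simp only [PiLp.smul_apply, PiLp.sub_apply, smul_eq_mul, vsub_eq_sub] at h2
      linarith [h2]
    have e6 : r₁ * (A 1 - p₁ 1) = r₂ * (p₂ 1 - D 1) := by
      have h2 := congrFun (congrArg (fun v : EuclideanSpace ℝ (Fin 2) => (v : Fin 2 → ℝ)) hreq) 1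
      simp only [PiLp.smul_apply, PiLp.sub_apply, smul_eq_mul, vsub_eq_sub] at h2
      linarith [h2]
    have hlin : r₁ * cross (B - A) (C - A) + r₂ * cross (B - D) (C - D) = 0 := by
      unfold cross
      simp only [PiLp.sub_apply]
      linear_combination (B 1 * r₁ - C 1 * r₁) * e1 + (-(B 0 * r₁) + C 0 * r₁) * e2 +
        (B 1 * r₂ - C 1 * r₂) * e3 + (-(B 0 * r₂) + C 0 * r₂) * e4 +
        (B 1 - C 1) * e5 + (-(B 0) + C 0) * e6
    have h5 : r₂ * (cross (B - A) (C - A) * cross (B - D) (C - D))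
        = -r₁ * (cross (B - A) (C - A) * cross (B - A) (C - A)) := by
      linear_combination cross (B - A) (C - A) * hlin
    nlinarith [h5, mul_pos hr₁ (mul_self_pos.mpr hXA0), hr₂]
  -- nondegeneracy of vectors
  have hBA : B - A ≠ (0 : EuclideanSpace ℝ (Fin 2)) := by
    rw [sub_ne_zero]
    rintro rfl; exact hAs hBs
  have hCA : C - A ≠ (0 : EuclideanSpace ℝ (Fin 2)) := by
    rw [sub_ne_zero]
    rintro rfl; exact hAs hCs
  have hBD : B - D ≠ (0 : EuclideanSpace ℝ (Fin 2)) := by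
    rw [sub_ne_zero]
    rintro rfl; exact hDs hBs
  have hCD : C - D ≠ (0 : EuclideanSpace ℝ (Fin 2)) := by
    rw [sub_ne_zero]
    rintro rfl; exact hDs hCs
  have hnA : 0 < ‖B - A‖ * ‖C - A‖ :=
    mul_pos (norm_pos_iff.mpr hBA) (norm_pos_iff.mpr hCA)
  have hnD : 0 < ‖B - D‖ * ‖C - D‖ :=
    mul_pos (norm_pos_iff.mpr hBD) (norm_pos_iff.mpr hCD)
  -- angles as vector angles
  have haA : ∠ B A C = InnerProductGeometry.angle (B - A) (C - A) := rfl
  have haD : ∠ B D C = InnerProductGeometry.angle (B - D) (C - D) := rfl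
  -- sine of the sum
  have hsum : Real.sin (∠ B A C + ∠ B D C) * ((‖B - A‖ * ‖C - A‖) * (‖B - D‖ * ‖C - D‖))
      = |cross (B - A) (C - A)| * (inner ℝ (B - D) (C - D) : ℝ)
        + (inner ℝ (B - A) (C - A) : ℝ) * |cross (B - D) (C - D)| := by
    rw [haA, haD, Real.sin_add]
    have h1 := sin_angle_mul (B - A) (C - A)
    have h2 := sin_angle_mul (B - D) (C - D)
    have h3 := cos_angle_mul (B - A) (C - A)
    have h4 := cos_angle_mul (B - D) (C - D)
    linear_combination
      (Real.cos (InnerProductGeometry.angle (B - D) (C - D)) * (‖B - D‖ * ‖C - D‖)) * h1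
      + |cross (B - A) (C - A)| * h4
      + (Real.sin (InnerProductGeometry.angle (B - D) (C - D)) * (‖B - D‖ * ‖C - D‖)) * h3
      + (inner ℝ (B - A) (C - A) : ℝ) * h2
  -- key identity in coordinates
  have hkey : (inner ℝ (B - A) (C - A) : ℝ) * cross (B - D) (C - D)
      - (inner ℝ (B - D) (C - D) : ℝ) * cross (B - A) (C - A)
      = cross (B - D) (C - D) * ((A 0 - O 0) ^ 2 + (A 1 - O 1) ^ 2 - r ^ 2) := by
    unfold cross
    rw [inner_eq, inner_eq]
    simp only [PiLp.sub_apply]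
    exact key (A 0) (A 1) (B 0) (B 1) (C 0) (C 1) (D 0) (D 1) (O 0) (O 1) r hBsq hCsq hDsq
  have hneg : |cross (B - A) (C - A)| * (inner ℝ (B - D) (C - D) : ℝ)
      + (inner ℝ (B - A) (C - A) : ℝ) * |cross (B - D) (C - D)| < 0 := by
    rcases lt_or_gt_of_ne hXA0 with hA' | hA'
    · have hD' : 0 < cross (B - D) (C - D) := by nlinarith [hXAXD]
      rw [abs_of_neg hA', abs_of_pos hD']
      nlinarith [hkey, hAsq, hD']
    · have hD' : cross (B - D) (C - D) < 0 := by nlinarith [hXAXD]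
      rw [abs_of_pos hA', abs_of_neg hD']
      nlinarith [hkey, hAsq, hD']
  have hsin : Real.sin (∠ B A C + ∠ B D C) < 0 := by
    have hmul : Real.sin (∠ B A C + ∠ B D C)
        * ((‖B - A‖ * ‖C - A‖) * (‖B - D‖ * ‖C - D‖)) < 0 := hsum ▸ hneg
    by_contra hc
    push_neg at hc
    nlinarith [mul_pos hnA hnD]
  by_contra hc
  push_neg at hc
  have h0 : 0 ≤ ∠ B A C + ∠ B D C :=
    add_nonneg (EuclideanGeometry.angle_nonneg _ _ _) (EuclideanGeometry.angle_nonneg _ _ _)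
  exact absurd (Real.sin_nonneg_of_nonneg_of_le_pi h0 hc) (not_le.mpr hsin)
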